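/- Let φ be a smoothing kernel with associated set G (properties A and B suffice), and let f ∈ C_{‖·‖}. Then for every x ∈ E the function h ↦ f(x+h) + φ(h) attains its minimum over Dom φ at some point of the interior of G; in particular min_{h ∈ Dom φ} [f(x+h) + φ(h)] = min_{h ∈ int G} [f(x+h) + φ(h)], and this minimum is achieved. -/

import Mathlib

open Set Pointwise

/-- `N` is a norm on the real vector space `E`. -/
structure IsNorm {E : Type*} [AddCommGroup E] [Module ℝ E] (N : E → ℝ) : Prop where
  nonneg : ∀ x, 0 ≤ N x
  eq_zero_iff : ∀ x, N x = 0 ↔ x = 0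
  smul : ∀ (c : ℝ) (x : E), N (c • x) = |c| * N x
  add_le : ∀ x y, N (x + y) ≤ N x + N y

/-- The norm dual to `N` (w.r.t. the inner product identification). -/
noncomputable def dualNorm {E : Type*} [NormedAddCommGroup E] [InnerProductSpace ℝ E]
    (N : E → ℝ) (ξ : E) : ℝ :=
  sSup ((fun x => (inner ℝ ξ x : ℝ)) '' {x : E | N x ≤ 1})

/-- `f` is Lipschitz continuous with constant 1 w.r.t. the norm `N`. -/
def LipWrt {E : Type*} [AddCommGroup E] [Module ℝ E] (N : E → ℝ) (f : E → ℝ) : Prop :=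
  ∀ x y, |f x - f y| ≤ N (x - y)

/-- Membership in the class `C_{‖·‖}`: convex and 1-Lipschitz w.r.t. `N`. -/
def MemC {E : Type*} [AddCommGroup E] [Module ℝ E] (N : E → ℝ) (f : E → ℝ) : Prop :=
  ConvexOn ℝ Set.univ f ∧ LipWrt N f

/-- A smoothing kernel: a twice continuously differentiable convex function `φ` on an open
convex set `dom`, with `φ(0) = 0`, `∇φ(0) = 0` (property A), together with a compact convex
set `G ⊆ dom` with `0 ∈ int G` and `φ > N` on `∂G` (property B). -/
structure SmoothingKernel (E : Type*) [NormedAddCommGroup E] [InnerProductSpace ℝ E]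
    [FiniteDimensional ℝ E] (N : E → ℝ) where
  dom : Set E
  φ : E → ℝ
  dom_open : IsOpen dom
  dom_convex : Convex ℝ dom
  φ_smooth : ContDiffOn ℝ 2 φ dom
  φ_convex : ConvexOn ℝ dom φ
  zero_mem_dom : (0 : E) ∈ dom
  φ_zero : φ 0 = 0
  grad_zero : gradient φ 0 = 0
  G : Set E
  G_sub_dom : G ⊆ dom
  G_compact : IsCompact G
  G_convex : Convex ℝ G
  zero_mem_int : (0 : E) ∈ interior G
  φ_gt_norm : ∀ x ∈ frontier G, N x < φ x

variable {E : Type*} [NormedAddCommGroup E] [InnerProductSpace ℝ E]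
  [FiniteDimensional ℝ E]

/-- for every `x`, the function `h ↦ f(x+h) + φ(h)` attains its minimum over
`Dom φ` at a point of the interior of `G`; in particular the minimum over `Dom φ` coincides
with the minimum over `int G`, and both are achieved. -/
theorem smoothing_min_attained_in_interior
    {N : E → ℝ} (hN : IsNorm N) (K : SmoothingKernel E N)
    (f : E → ℝ) (hf : MemC N f) (x : E) :
    ∃ h₀ ∈ interior K.G,
      IsLeast ((fun h => f (x + h) + K.φ h) '' K.dom) (f (x + h₀) + K.φ h₀) ∧
      IsLeast ((fun h => f (x + h) + K.φ h) '' interior K.G) (f (x + h₀) + K.φ h₀) := by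
  set ψ : E → ℝ := fun h => f (x + h) + K.φ h with hψ
  have hf_cont : Continuous f := hf.1.locallyLipschitz.continuous
  have hψ_contOn : ContinuousOn ψ K.dom :=
    ((hf_cont.comp (continuous_const.add continuous_id)).continuousOn).add
      (K.φ_smooth.continuousOn)
  have hG0 : (0 : E) ∈ K.G := interior_subset K.zero_mem_int
  obtain ⟨h₀, hh₀G, hmin⟩ := K.G_compact.exists_isMinOn ⟨0, hG0⟩
    (hψ_contOn.mono K.G_sub_dom)
  -- h₀ is in the interior of G
  have hψ0 : ψ 0 = f x := by simp [hψ, K.φ_zero]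
  have hh₀int : h₀ ∈ interior K.G := by
    by_contra hc
    have hfr : h₀ ∈ frontier K.G := by
      rw [frontier, K.G_compact.isClosed.closure_eq]
      exact ⟨hh₀G, hc⟩
    have h1 : N h₀ < K.φ h₀ := K.φ_gt_norm h₀ hfr
    have h2 : |f (x + h₀) - f x| ≤ N h₀ := by simpa using hf.2 (x + h₀) x
    have h2' : f x - f (x + h₀) ≤ N h₀ := by
      have := (abs_le.mp h2).1; linarith
    have h4 : ψ h₀ ≤ ψ 0 := hmin hG0
    simp only [hψ, add_zero, K.φ_zero] at h4
    linarith
  -- ψ is convex on dom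
  have hψ_convex : ConvexOn ℝ K.dom ψ := by
    have h1 : ConvexOn ℝ K.dom fun h => f (x + h) := by
      refine ⟨K.dom_convex, fun a ha b hb s t hs ht hst => ?_⟩
      have := hf.1.2 (mem_univ (x + a)) (mem_univ (x + b)) hs ht hst
      calc f (x + (s • a + t • b)) = f (s • (x + a) + t • (x + b)) := by
            rw [smul_add, smul_add,
              show s • x + s • a + (t • x + t • b) = (s + t) • x + (s • a + t • b) by module,
              hst, one_smul]
        _ ≤ s • f (x + a) + t • f (x + b) := this
    exact h1.add K.φ_convex
  -- minimum over dom
  have hmin_dom : ∀ h ∈ K.dom, ψ h₀ ≤ ψ h := by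
    intro h hh
    have hcont : ContinuousAt (fun t : ℝ => h₀ + t • (h - h₀)) 0 := by fun_prop
    have hmem : ∀ᶠ t : ℝ in nhds 0, h₀ + t • (h - h₀) ∈ interior K.G := by
      apply hcont
      rw [show (fun t : ℝ => h₀ + t • (h - h₀)) 0 = h₀ by simp]
      exact isOpen_interior.mem_nhds hh₀int
    obtain ⟨δ, hδ0, hδ⟩ := Metric.eventually_nhds_iff.mp hmem
    set t : ℝ := min (δ / 2) (1 / 2) with htdef
    have ht0 : 0 < t := lt_min (by linarith) (by norm_num)
    have ht1 : t < 1 := lt_of_le_of_lt (min_le_right _ _) (by norm_num)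
    have htδ : dist t 0 < δ := by
      rw [Real.dist_eq, sub_zero, abs_of_pos ht0]
      exact lt_of_le_of_lt (min_le_left _ _) (by linarith)
    have hpt : h₀ + t • (h - h₀) ∈ interior K.G := hδ htδ
    have heq : h₀ + t • (h - h₀) = (1 - t) • h₀ + t • h := by module
    have hcx := hψ_convex.2 (K.G_sub_dom hh₀G) hh (by linarith : (0:ℝ) ≤ 1 - t)
      ht0.le (by ring)
    have hle : ψ h₀ ≤ ψ ((1 - t) • h₀ + t • h) := by
      rw [← heq]; exact hmin (interior_subset hpt)
    have : ψ h₀ ≤ (1 - t) * ψ h₀ + t * ψ h := by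
      simpa [smul_eq_mul] using hle.trans hcx
    nlinarith
  refine ⟨h₀, hh₀int, ⟨⟨h₀, K.G_sub_dom hh₀G, rfl⟩, ?_⟩, ⟨⟨h₀, hh₀int, rfl⟩, ?_⟩⟩
  · rintro y ⟨h, hh, rfl⟩
    exact hmin_dom h hh
  · rintro y ⟨h, hh, rfl⟩
    exact hmin (interior_subset hh)
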